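/- Let k be a field of characteristic 0 and work in the polynomial ring k[X,Y,Z,W]. One has the ideal identity ((X,Y)², YZ) ∩ (Y, Z) = (Y, Z) ∩ (Y, X²) ∩ (X, Y, Z)², where (X,Y,Z)² denotes the ideal generated by all products of two elements from {X, Y, Z}. -/

import Mathlib

open MvPolynomial

section Aux
variable {k : Type*} [Field k] [CharZero k]

private lemma phi_idem_aux (v : Fin 4 → MvPolynomial (Fin 4) k)
    (h0 : v 0 = 0) (h2 : v 2 = 0) (h3 : v 3 = X 3)
    (a : MvPolynomial (Fin 4) k) :
    aeval v (aeval (![0, 0, 0, X 3] : Fin 4 → MvPolynomial (Fin 4) k) a)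
      = aeval (![0, 0, 0, X 3] : Fin 4 → MvPolynomial (Fin 4) k) a := by
  have hv : (fun i => aeval v ((![0, 0, 0, X 3] : Fin 4 → MvPolynomial (Fin 4) k) i))
      = (![0, 0, 0, X 3] : Fin 4 → MvPolynomial (Fin 4) k) := by
    funext i; fin_cases i <;> simp [h0, h2, h3]
  rw [← AlgHom.comp_apply, MvPolynomial.comp_aeval, hv]

private lemma sub_phi_mem (a : MvPolynomial (Fin 4) k) :
    a - aeval (![0, 0, 0, X 3] : Fin 4 → MvPolynomial (Fin 4) k) a
      ∈ Ideal.span {(X 0 : MvPolynomial (Fin 4) k), X 1, X 2} := by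
  induction a using MvPolynomial.induction_on with
  | C r => simp
  | add p q hp hq =>
      have : p + q - aeval (![0, 0, 0, X 3] : Fin 4 → MvPolynomial (Fin 4) k) (p + q)
          = (p - aeval ![0, 0, 0, X 3] p) + (q - aeval ![0, 0, 0, X 3] q) := by
        simp; ring
      rw [this]; exact add_mem hp hq
  | mul_X p n hp =>
      fin_cases n
      · show p * X 0 - aeval (![0, 0, 0, X 3] : Fin 4 → MvPolynomial (Fin 4) k) (p * X 0) ∈ _
        have : p * X 0 - aeval (![0, 0, 0, X 3] : Fin 4 → MvPolynomial (Fin 4) k) (p * X 0)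
            = p * X 0 := by simp
        rw [this]
        exact Ideal.mul_mem_left _ p (Ideal.subset_span (by simp))
      · show p * X 1 - aeval (![0, 0, 0, X 3] : Fin 4 → MvPolynomial (Fin 4) k) (p * X 1) ∈ _
        have : p * X 1 - aeval (![0, 0, 0, X 3] : Fin 4 → MvPolynomial (Fin 4) k) (p * X 1)
            = p * X 1 := by simp
        rw [this]
        exact Ideal.mul_mem_left _ p (Ideal.subset_span (by simp))
      · show p * X 2 - aeval (![0, 0, 0, X 3] : Fin 4 → MvPolynomial (Fin 4) k) (p * X 2) ∈ _
        have : p * X 2 - aeval (![0, 0, 0, X 3] : Fin 4 → MvPolynomial (Fin 4) k) (p * X 2)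
            = p * X 2 := by simp
        rw [this]
        exact Ideal.mul_mem_left _ p (Ideal.subset_span (by simp))
      · show p * X 3 - aeval (![0, 0, 0, X 3] : Fin 4 → MvPolynomial (Fin 4) k) (p * X 3) ∈ _
        have : p * X 3 - aeval (![0, 0, 0, X 3] : Fin 4 → MvPolynomial (Fin 4) k) (p * X 3)
            = (p - aeval ![0, 0, 0, X 3] p) * X 3 := by simp; ring
        rw [this]
        exact Ideal.mul_mem_right _ _ hp

private lemma A_le_M :
    Ideal.span {(X 0 : MvPolynomial (Fin 4) k) ^ 2, X 0 * X 1, X 1 ^ 2, X 1 * X 2} ≤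
    Ideal.span {(X 0 : MvPolynomial (Fin 4) k) ^ 2, X 0 * X 1, X 0 * X 2,
      X 1 ^ 2, X 1 * X 2, X 2 ^ 2} := by
  rw [Ideal.span_le]
  rintro f hf
  simp only [Set.mem_insert_iff, Set.mem_singleton_iff] at hf
  rcases hf with rfl | rfl | rfl | rfl <;> exact Ideal.subset_span (by simp)

private lemma A_le_P :
    Ideal.span {(X 0 : MvPolynomial (Fin 4) k) ^ 2, X 0 * X 1, X 1 ^ 2, X 1 * X 2} ≤
    Ideal.span {(X 1 : MvPolynomial (Fin 4) k), X 0 ^ 2} := by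
  rw [Ideal.span_le]
  rintro f hf
  simp only [Set.mem_insert_iff, Set.mem_singleton_iff] at hf
  rcases hf with rfl | rfl | rfl | rfl
  · exact Ideal.subset_span (by simp)
  · exact Ideal.mul_mem_left _ _ (Ideal.subset_span (by simp))
  · exact (sq (X 1 : MvPolynomial (Fin 4) k)) ▸
      Ideal.mul_mem_left _ _ (Ideal.subset_span (by simp))
  · exact Ideal.mul_mem_right _ _ (Ideal.subset_span (by simp))

private lemma key_incl :
    Ideal.span {(X 1 : MvPolynomial (Fin 4) k), X 0 ^ 2} ⊓
      Ideal.span {(X 0 : MvPolynomial (Fin 4) k) ^ 2, X 0 * X 1, X 0 * X 2,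
        X 1 ^ 2, X 1 * X 2, X 2 ^ 2} ≤
    Ideal.span {(X 0 : MvPolynomial (Fin 4) k) ^ 2, X 0 * X 1, X 1 ^ 2, X 1 * X 2} := by
  intro f hf
  rw [Submodule.mem_inf] at hf
  obtain ⟨hfP, hfM⟩ := hf
  rw [Ideal.mem_span_pair] at hfP
  obtain ⟨a, b, hab⟩ := hfP
  have hbA : b * X 0 ^ 2
      ∈ Ideal.span {(X 0 : MvPolynomial (Fin 4) k) ^ 2, X 0 * X 1, X 1 ^ 2, X 1 * X 2} :=
    Ideal.mul_mem_left _ _ (Ideal.subset_span (by simp))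
  have haM : a * X 1 ∈ Ideal.span {(X 0 : MvPolynomial (Fin 4) k) ^ 2, X 0 * X 1, X 0 * X 2,
      X 1 ^ 2, X 1 * X 2, X 2 ^ 2} := by
    have h1 : a * X 1 = f - b * X 0 ^ 2 := by rw [← hab]; ring
    rw [h1]
    exact sub_mem hfM (A_le_M hbA)
  set c : MvPolynomial (Fin 4) k :=
    aeval (![0, 0, 0, X 3] : Fin 4 → MvPolynomial (Fin 4) k) a with hc
  have hg : a - c ∈ Ideal.span {(X 0 : MvPolynomial (Fin 4) k), X 1, X 2} := sub_phi_mem a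
  have hgA : (a - c) * X 1
      ∈ Ideal.span {(X 0 : MvPolynomial (Fin 4) k) ^ 2, X 0 * X 1, X 1 ^ 2, X 1 * X 2} := by
    refine Submodule.span_induction ?_ ?_ ?_ ?_ hg
    · rintro x hx
      simp only [Set.mem_insert_iff, Set.mem_singleton_iff] at hx
      rcases hx with rfl | rfl | rfl
      · exact Ideal.subset_span (by simp)
      · exact (sq (X 1 : MvPolynomial (Fin 4) k)) ▸ Ideal.subset_span (by simp)
      · exact (mul_comm (X 2 : MvPolynomial (Fin 4) k) (X 1)) ▸
          Ideal.subset_span (by simp)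
    · simp
    · intro x y _ _ hx hy
      rw [add_mul]; exact add_mem hx hy
    · intro r x _ hx
      rw [smul_mul_assoc]; exact Submodule.smul_mem _ _ hx
  have hcM : c * X 1 ∈ Ideal.span {(X 0 : MvPolynomial (Fin 4) k) ^ 2, X 0 * X 1, X 0 * X 2,
      X 1 ^ 2, X 1 * X 2, X 2 ^ 2} := by
    have h2 : c * X 1 = a * X 1 - (a - c) * X 1 := by ring
    rw [h2]
    exact sub_mem haM (A_le_M hgA)
  have hcM2 : c * X 1 ∈ Ideal.span {(X 1 : MvPolynomial (Fin 4) k) ^ 2} := by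
    have hmap := Ideal.mem_map_of_mem
      (aeval (![0, X 1, 0, X 3] : Fin 4 → MvPolynomial (Fin 4) k)).toRingHom hcM
    rw [Ideal.map_span] at hmap
    have hle : (aeval (![0, X 1, 0, X 3] : Fin 4 → MvPolynomial (Fin 4) k)).toRingHom ''
        {(X 0 : MvPolynomial (Fin 4) k) ^ 2, X 0 * X 1, X 0 * X 2,
          X 1 ^ 2, X 1 * X 2, X 2 ^ 2}
        ⊆ (Ideal.span {(X 1 : MvPolynomial (Fin 4) k) ^ 2} : Set _) := by
      rintro y ⟨x, hx, rfl⟩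
      simp only [Set.mem_insert_iff, Set.mem_singleton_iff] at hx
      rcases hx with rfl | rfl | rfl | rfl | rfl | rfl <;>
        · simp only [AlgHom.toRingHom_eq_coe, RingHom.coe_coe, map_mul, map_pow, aeval_X]
          simp only [Matrix.cons_val_zero, Matrix.cons_val_one, Matrix.head_cons,
            Matrix.cons_val_two, Matrix.tail_cons, zero_mul, mul_zero, zero_pow,
            ne_eq, OfNat.ofNat_ne_zero, not_false_iff]
          first
            | exact Ideal.zero_mem _
            | exact Ideal.subset_span rfl
            | skip
    have hmem := (Ideal.span_le.mpr hle) hmap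
    have hρc : (aeval (![0, X 1, 0, X 3] : Fin 4 → MvPolynomial (Fin 4) k)) (c * X 1)
        = c * X 1 := by
      rw [map_mul, hc, phi_idem_aux] <;> simp
    have hmem' : (aeval (![0, X 1, 0, X 3] : Fin 4 → MvPolynomial (Fin 4) k)) (c * X 1)
        ∈ Ideal.span {(X 1 : MvPolynomial (Fin 4) k) ^ 2} := hmem
    rwa [hρc] at hmem'
  rw [Ideal.mem_span_singleton] at hcM2
  obtain ⟨h, hh⟩ := hcM2
  have hX1 : (X 1 : MvPolynomial (Fin 4) k) ≠ 0 := MvPolynomial.X_ne_zero 1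
  have hch : c = X 1 * h := by
    have h3 : c * X 1 = (X 1 * h) * X 1 := by rw [hh]; ring
    exact mul_right_cancel₀ hX1 h3
  have hc0 : c = 0 := by
    have h4 := congrArg (aeval (![0, 0, 0, X 3] : Fin 4 → MvPolynomial (Fin 4) k)) hch
    rw [hc, phi_idem_aux] at h4 <;> simp at h4 ⊢
    · rw [hc]; exact h4
  have haA : a * X 1
      ∈ Ideal.span {(X 0 : MvPolynomial (Fin 4) k) ^ 2, X 0 * X 1, X 1 ^ 2, X 1 * X 2} := by
    have h6 := hgA
    rw [hc0, sub_zero] at h6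
    exact h6
  rw [← hab]
  exact add_mem haA hbA

end Aux

/-- In k[X,Y,Z,W] (variables X = X 0, Y = X 1, Z = X 2, W = X 3):
((X,Y)², YZ) ∩ (Y, Z) = (Y, Z) ∩ (Y, X²) ∩ (X, Y, Z)². -/
theorem ideal_identity_case_IV (k : Type*) [Field k] [CharZero k] :
    Ideal.span {(X 0 : MvPolynomial (Fin 4) k) ^ 2, X 0 * X 1, X 1 ^ 2, X 1 * X 2} ⊓
      Ideal.span {(X 1 : MvPolynomial (Fin 4) k), X 2} =
    Ideal.span {(X 1 : MvPolynomial (Fin 4) k), X 2} ⊓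
      Ideal.span {(X 1 : MvPolynomial (Fin 4) k), X 0 ^ 2} ⊓
      Ideal.span {(X 0 : MvPolynomial (Fin 4) k) ^ 2, X 0 * X 1, X 0 * X 2,
        X 1 ^ 2, X 1 * X 2, X 2 ^ 2} := by
  apply le_antisymm
  · exact le_inf (le_inf inf_le_right (inf_le_left.trans A_le_P)) (inf_le_left.trans A_le_M)
  · intro f hf
    rw [Submodule.mem_inf, Submodule.mem_inf] at hf
    rw [Submodule.mem_inf]
    exact ⟨key_incl (Submodule.mem_inf.mpr ⟨hf.1.2, hf.2⟩), hf.1.1⟩
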